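/- Let k ≥ 1, n ≥ k + 1, let G be the clique of size n, and let ḡ be a k-tuple of pairwise distinct vertices. Then for every d ≥ 1 and every unmarked vertex v, μ_d(v) = { List.destutter (· ≠ ·) [μ_{d−1}(v), μ_{d−1}(g_j)] : 1 ≤ j ≤ k }; for every d ≥ 0 any two unmarked vertices are ∼_d-equivalent, and no marked vertex is ∼_d-equivalent to any other vertex; hence for every d there are exactly k + 1 equivalence classes of ∼_d, and ∼_d coincides with ∼_1 for all d ≥ 1. -/

import Mathlib

/-! Markings of topologies with a marked k-tuple, following the paper's
`d`-contraction construction. -/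

noncomputable def dst {α : Type} (l : List α) : List α :=
  @List.destutter α (· ≠ ·) (fun _ _ => Classical.dec _) l

/-- A topology: a finite nonempty directed graph with no self-loops. -/
structure Topo where
  V : Type
  fintypeV : Fintype V
  decEqV : DecidableEq V
  nonemptyV : Nonempty V
  E : V → V → Prop
  no_self_loops : ∀ v, ¬ E v v

attribute [instance] Topo.fintypeV Topo.decEqV Topo.nonemptyV

/-- `Mark k d`: the type of `d`-th markings (independent of the topology). -/
def Mark (k : ℕ) : ℕ → Type
  | 0 => Finset (Fin k)
  | d + 1 => Set (List (Mark k d))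

def Mark.toSet {k d : ℕ} (m : Mark k (d + 1)) : Set (List (Mark k d)) := m

/-- The labeling `Λ`: `Λ (g i) = {i}` and `Λ v = ∅` for unmarked `v`
(for injective `g`). -/
def lab {k : ℕ} (G : Topo) (g : Fin k → G.V) (v : G.V) : Finset (Fin k) :=
  Finset.univ.filter fun i => g i = v

/-- `InX G g v π`: `π` is a directed path starting at `v`, ending at a marked
vertex, with all non-final vertices unmarked.  (The set `X(v)` of the paper.) -/
def InX {k : ℕ} (G : Topo) (g : Fin k → G.V) (v : G.V) (π : List G.V) : Prop :=
  π ≠ [] ∧ π.head? = some v ∧ List.Chain' G.E π ∧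
    (∀ u ∈ π.dropLast, u ∉ Set.range g) ∧
    ∃ w ∈ Set.range g, π.getLast? = some w

/-- The `d`-th marking `μ_d`. -/
noncomputable def mu {k : ℕ} (G : Topo) (g : Fin k → G.V) : (d : ℕ) → G.V → Mark k d
  | 0, v => lab G g v
  | d + 1, v => { s : List (Mark k d) | ∃ π : List G.V, InX G g v π ∧ s = dst (π.map (mu G g d)) }

/-- The clique of size `n`: vertices `Fin n`, edges between all pairs of
distinct vertices. -/
def clique (n : ℕ) (hn : 0 < n) : Topo :=
  haveI : NeZero n := ⟨by omega⟩
  { V := Fin n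
    fintypeV := inferInstance
    decEqV := inferInstance
    nonemptyV := ⟨0⟩
    E := fun i j => i ≠ j
    no_self_loops := fun _ h => h rfl }


attribute [reducible] clique

section Stmt8Aux

lemma dst_singleton {α : Type} (a : α) : dst [a] = [a] := rfl

lemma dst_cons₂_ne {α : Type} {a b : α} (l : List α) (h : a ≠ b) :
    dst (a :: b :: l) = a :: dst (b :: l) := by
  simp only [dst, List.destutter_cons', List.destutter'_cons, if_pos h]

lemma dst_cons₂_eq {α : Type} {a : α} (l : List α) :
    dst (a :: a :: l) = dst (a :: l) := by
  simp only [dst, List.destutter_cons', List.destutter'_cons]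
  rw [if_neg (by simp)]

lemma dst_pair {α : Type} {a b : α} (h : a ≠ b) : dst [a, b] = [a, b] := by
  rw [dst_cons₂_ne _ h, dst_singleton]

lemma dst_map_aux {α β : Type} (f : α → β) (c m : β) (w : α) (hw : f w = m) :
    ∀ l : List α, l ≠ [] → (∀ x ∈ l, f x = c) →
      dst ((l ++ [w]).map f) = dst [c, m] := by
  intro l
  induction l with
  | nil => intro h; exact absurd rfl h
  | cons a t ih =>
    intro _ hl
    have ha : f a = c := hl a List.mem_cons_self
    cases t with
    | nil => simp only [List.cons_append, List.nil_append, List.map_cons, List.map_nil, ha, hw]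
    | cons b t' =>
      have hb : f b = c := hl b (by simp)
      have key := ih (by simp) (fun x hx => hl x (List.mem_cons_of_mem a hx))
      simp only [List.cons_append, List.map_cons] at key ⊢
      rw [ha, hb]
      rw [hb] at key
      rw [dst_cons₂_eq]
      exact key

variable {k n : ℕ}

lemma mem_mu_succ {G : Topo} (g : Fin k → G.V) (d : ℕ) (v : G.V) (s : List (Mark k d)) :
    s ∈ Mark.toSet (mu G g (d + 1) v) ↔
      ∃ π : List G.V, InX G g v π ∧ s = dst (π.map (mu G g d)) := Iff.rfl

lemma lab_unmarked (hn : 0 < n) (g : Fin k → Fin n) {v : Fin n} (hv : v ∉ Set.range g) :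
    lab (clique n hn) g v = ∅ := by
  ext i
  simp only [lab, Finset.mem_filter, Finset.mem_univ, true_and, Finset.notMem_empty, iff_false]
  exact fun h => hv ⟨i, h⟩

lemma lab_marked (hn : 0 < n) (g : Fin k → Fin n) (hg : Function.Injective g) (i : Fin k) :
    lab (clique n hn) g (g i) = {i} := by
  ext j
  simp [lab, hg.eq_iff]

lemma mu_marked (hn : 0 < n) (g : Fin k → Fin n) (d : ℕ) (i : Fin k) :
    Mark.toSet (mu (clique n hn) g (d + 1) (g i)) = {[mu (clique n hn) g d (g i)]} := by
  ext s
  refine (mem_mu_succ (G := clique n hn) g d (g i) s).trans ?_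
  constructor
  · rintro ⟨π, ⟨hne, hhead, _, hdrop, _⟩, rfl⟩
    cases π with
    | nil => exact absurd rfl hne
    | cons x rest =>
      have hx : x = g i := by simpa using hhead
      cases rest with
      | nil => rw [hx, List.map_cons, List.map_nil, dst_singleton]; rfl
      | cons y t =>
        exact absurd (⟨i, hx.symm⟩ : x ∈ Set.range g) (hdrop x (by simp))
  · intro hs
    rw [Set.mem_singleton_iff] at hs
    refine ⟨[g i], ⟨by simp, rfl, List.isChain_singleton _, by simp, ⟨g i, ⟨i, rfl⟩, by simp⟩⟩, ?_⟩
    rw [hs, List.map_cons, List.map_nil, dst_singleton]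

lemma mu_unmarked_succ (hn : 0 < n) (g : Fin k → Fin n) (d : ℕ)
    (hP : ∀ u v : Fin n, u ∉ Set.range g → v ∉ Set.range g →
      mu (clique n hn) g d u = mu (clique n hn) g d v)
    {v : Fin n} (hv : v ∉ Set.range g) :
    Mark.toSet (mu (clique n hn) g (d + 1) v) =
      { s | ∃ j : Fin k, s = dst [mu (clique n hn) g d v, mu (clique n hn) g d (g j)] } := by
  ext s
  refine (mem_mu_succ (G := clique n hn) g d v s).trans ?_
  constructor
  · rintro ⟨π, ⟨hne, hhead, hch, hdrop, w, ⟨j, rfl⟩, hlast⟩, rfl⟩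
    refine ⟨j, ?_⟩
    have h1 : π.getLast hne = g j := by
      rw [List.getLast?_eq_getLast hne] at hlast
      exact Option.some_injective _ hlast
    have h2 : π.dropLast ++ ([g j] : List (clique n hn).V) = π := by
      rw [← h1]; exact List.dropLast_append_getLast hne
    have hdl : π.dropLast ≠ [] := by
      intro h
      rw [h, List.nil_append] at h2
      rw [← h2] at hhead
      have : g j = v := by simpa using hhead
      exact hv ⟨j, this⟩
    rw [← h2]
    exact dst_map_aux (mu (clique n hn) g d) (mu (clique n hn) g d v)
      (mu (clique n hn) g d (g j)) (g j) rfl π.dropLast hdl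
      (fun x hx => hP x v (hdrop x hx) hv)
  · rintro ⟨j, rfl⟩
    have hvj : v ≠ g j := fun h => hv ⟨j, h.symm⟩
    refine ⟨[v, g j], ⟨by simp, rfl, ?_, ?_, ⟨g j, ⟨j, rfl⟩, by simp⟩⟩, rfl⟩
    · exact List.isChain_pair.mpr hvj
    · intro u hu
      have : u = v := by simpa using hu
      rw [this]; exact hv

lemma mu_unmarked_eq (hn : 0 < n) (g : Fin k → Fin n) :
    ∀ d : ℕ, ∀ u v : Fin n, u ∉ Set.range g → v ∉ Set.range g →
      mu (clique n hn) g d u = mu (clique n hn) g d v := by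
  intro d
  induction d with
  | zero =>
    intro u v hu hv
    show lab (clique n hn) g u = lab (clique n hn) g v
    rw [lab_unmarked hn g hu, lab_unmarked hn g hv]
  | succ d ih =>
    intro u v hu hv
    have h1 := mu_unmarked_succ hn g d ih hu
    have h2 := mu_unmarked_succ hn g d ih hv
    have : Mark.toSet (mu (clique n hn) g (d + 1) u) =
        Mark.toSet (mu (clique n hn) g (d + 1) v) := by
      rw [h1, h2, ih u v hu hv]
    exact this

lemma mu_marked_ne (hn : 0 < n) (g : Fin k → Fin n) (hg : Function.Injective g) :
    ∀ d : ℕ, ∀ i : Fin k, ∀ v : Fin n, v ≠ g i →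
      mu (clique n hn) g d (g i) ≠ mu (clique n hn) g d v := by
  intro d
  induction d with
  | zero =>
    intro i v hvi h
    replace h : lab (clique n hn) g (g i) = lab (clique n hn) g v := h
    by_cases hv : v ∈ Set.range g
    · obtain ⟨i', rfl⟩ := hv
      rw [lab_marked hn g hg, lab_marked hn g hg] at h
      have : i = i' := by simpa using h
      exact hvi (by rw [this])
    · rw [lab_marked hn g hg, lab_unmarked hn g hv] at h
      simpa using h
  | succ d ih =>
    intro i v hvi h
    have hmem : [mu (clique n hn) g d (g i)] ∈ Mark.toSet (mu (clique n hn) g (d + 1) (g i)) := by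
      rw [mu_marked hn g d i]; exact rfl
    rw [show Mark.toSet (mu (clique n hn) g (d + 1) (g i)) =
        Mark.toSet (mu (clique n hn) g (d + 1) v) from congrArg _ h] at hmem
    by_cases hv : v ∈ Set.range g
    · obtain ⟨i', rfl⟩ := hv
      rw [mu_marked hn g d i'] at hmem
      have heq : mu (clique n hn) g d (g i) = mu (clique n hn) g d (g i') := by simpa using hmem
      exact ih i (g i') hvi heq
    · rw [mu_unmarked_succ hn g d (mu_unmarked_eq hn g d) hv] at hmem
      obtain ⟨j, hj⟩ := hmem
      have hvj : v ≠ g j := fun hh => hv ⟨j, hh.symm⟩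
      have hne : mu (clique n hn) g d v ≠ mu (clique n hn) g d (g j) :=
        fun hh => ih j v hvj hh.symm
      rw [dst_pair hne] at hj
      simp at hj

end Stmt8Aux

/-- in the clique of size `n ≥ k + 1`, for `d ≥ 1` (written `d + 1`)
and unmarked `v`, `μ_{d+1}(v) = { destutter [μ_d(v), μ_d(g j)] : j }`; all
unmarked vertices are `∼_d`-equivalent, marked vertices are `∼_d`-equivalent to
no other vertex, there are exactly `k + 1` classes, and `∼_d` coincides with
`∼_1` for `d ≥ 1`. -/
theorem stmt8 {k n : ℕ} (hk : 1 ≤ k) (hkn : k + 1 ≤ n) (hn : 0 < n)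
    (g : Fin k → Fin n) (hg : Function.Injective g) :
    (∀ (d : ℕ) (v : Fin n), v ∉ Set.range g →
      Mark.toSet (mu (clique n hn) g (d + 1) v) =
        { s | ∃ j : Fin k, s = dst [mu (clique n hn) g d v, mu (clique n hn) g d (g j)] }) ∧
    (∀ (d : ℕ) (u v : Fin n), u ∉ Set.range g → v ∉ Set.range g →
      mu (clique n hn) g d u = mu (clique n hn) g d v) ∧
    (∀ (d : ℕ) (i : Fin k) (v : Fin n), v ≠ g i →
      mu (clique n hn) g d (g i) ≠ mu (clique n hn) g d v) ∧
    (∀ d : ℕ, (Set.range (mu (clique n hn) g d)).ncard = k + 1) ∧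
    (∀ d : ℕ, 1 ≤ d → ∀ u v : Fin n,
      (mu (clique n hn) g d u = mu (clique n hn) g d v ↔
        mu (clique n hn) g 1 u = mu (clique n hn) g 1 v)) := by
  have hG := clique n hn
  -- an unmarked vertex exists
  have hne_univ : Set.range g ≠ Set.univ := by
    intro h
    have hsurj : Function.Surjective g := Set.range_eq_univ.mp h
    have := Fintype.card_le_of_surjective g hsurj
    simp only [Fintype.card_fin] at this
    omega
  obtain ⟨v0, hv0⟩ := (Set.ne_univ_iff_exists_notMem _).mp hne_univ
  refine ⟨fun d v hv => mu_unmarked_succ hn g d (mu_unmarked_eq hn g d) hv,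
    fun d => mu_unmarked_eq hn g d, mu_marked_ne hn g hg, ?_, ?_⟩
  · -- ncard
    intro d
    have hrange : Set.range (mu (clique n hn) g d) =
        mu (clique n hn) g d '' (insert v0 (Set.range g)) := by
      apply Set.Subset.antisymm
      · rintro x ⟨u, rfl⟩
        by_cases hu : u ∈ Set.range g
        · exact ⟨u, Set.mem_insert_of_mem _ hu, rfl⟩
        · exact ⟨v0, Set.mem_insert _ _, mu_unmarked_eq hn g d v0 u hv0 hu⟩
      · rintro x ⟨u, _, rfl⟩; exact ⟨u, rfl⟩
    have hinj : Set.InjOn (mu (clique n hn) g d) (insert v0 (Set.range g)) := by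
      intro a ha b hb hab
      rcases Set.mem_insert_iff.mp ha with rfl | ⟨i, rfl⟩
      · rcases Set.mem_insert_iff.mp hb with rfl | ⟨i, rfl⟩
        · rfl
        · exact absurd hab.symm (mu_marked_ne hn g hg d i a (fun h => hv0 (h ▸ ⟨i, rfl⟩)))
      · rcases Set.mem_insert_iff.mp hb with rfl | ⟨i', rfl⟩
        · exact absurd hab (mu_marked_ne hn g hg d i b (fun h => hv0 (h ▸ ⟨i, rfl⟩)))
        · by_cases hii : i = i'
          · rw [hii]
          · exact absurd hab (mu_marked_ne hn g hg d i (g i') (fun h => hii (hg h).symm))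
    rw [hrange, Set.ncard_image_of_injOn hinj,
      Set.ncard_insert_of_notMem hv0 (Set.finite_range g)]
    have : (Set.range g).ncard = k := by
      rw [← Nat.card_coe_set_eq, Nat.card_range_of_injective hg,
        Nat.card_eq_fintype_card, Fintype.card_fin]
    omega
  · -- stability
    have key : ∀ d : ℕ, ∀ u v : Fin n,
        mu (clique n hn) g d u = mu (clique n hn) g d v ↔
          (u = v ∨ (u ∉ Set.range g ∧ v ∉ Set.range g)) := by
      intro d u v
      constructor
      · intro h
        by_cases hu : u ∈ Set.range g
        · obtain ⟨i, rfl⟩ := hu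
          by_cases huv : v = g i
          · exact Or.inl huv.symm
          · exact absurd h (mu_marked_ne hn g hg d i v huv)
        · by_cases hv : v ∈ Set.range g
          · obtain ⟨i, rfl⟩ := hv
            exact absurd h.symm (mu_marked_ne hn g hg d i u (fun hh => hu (hh ▸ ⟨i, rfl⟩)))
          · exact Or.inr ⟨hu, hv⟩
      · rintro (rfl | ⟨hu, hv⟩)
        · rfl
        · exact mu_unmarked_eq hn g d u v hu hv
    intro d _ u v
    rw [key d u v, key 1 u v]
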